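/- Let V ↪ H ↪ V* be a Gelfand triple, L : V → V* a bounded linear operator that is elliptic on V with constant c_L > 0 (⟨L v, v⟩ ≥ c_L ‖v‖_V²), and consider the implicit Euler recursion (p_j − p_{j−1})/τ + L p_j = F_j in V* with data F_j := u̇(t_j) + L u(t_j), where u ∈ H²(0,T;V*) ∩ H¹(0,T;V) and p_0 = u(0). Then for all j, ‖p_j − u(t_j)‖_H² + c_L Σ_{k=1}^j τ ‖p_k − u(t_k)‖_V² ≤ (τ²/(3 c_L)) ∫₀^{t_j} ‖ü(s)‖_{V*}² ds. -/

import Mathlib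

open scoped RealInnerProductSpace
open MeasureTheory

lemma my_integral_cauchy_schwarz {α : Type*} [MeasurableSpace α] (μ : Measure α)
    (f g : α → ℝ) (hf2 : Integrable (fun x => f x ^ 2) μ)
    (hg2 : Integrable (fun x => g x ^ 2) μ)
    (hfg : Integrable (fun x => f x * g x) μ) :
    ∫ x, f x * g x ∂μ ≤ Real.sqrt (∫ x, f x ^ 2 ∂μ) * Real.sqrt (∫ x, g x ^ 2 ∂μ) := by
  set A := ∫ x, f x ^ 2 ∂μ with hA
  set B := ∫ x, f x * g x ∂μ with hB
  set C := ∫ x, g x ^ 2 ∂μ with hC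
  have hA0 : 0 ≤ A := integral_nonneg fun x => sq_nonneg _
  have hC0 : 0 ≤ C := integral_nonneg fun x => sq_nonneg _
  have key : ∀ t : ℝ, 0 ≤ A * t ^ 2 + (2 * B) * t + C := by
    intro t
    have h1 : (0:ℝ) ≤ ∫ x, (t * f x + g x) ^ 2 ∂μ := integral_nonneg fun x => sq_nonneg _
    have h2 : ∫ x, (t * f x + g x) ^ 2 ∂μ = t ^ 2 * A + (2 * t) * B + C := by
      have e1 : ∫ x, (t * f x + g x) ^ 2 ∂μ
          = ∫ x, (t ^ 2 * f x ^ 2 + (2 * t * (f x * g x) + g x ^ 2)) ∂μ := by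
        congr 1; ext x; ring
      have i1 : ∫ x, (t ^ 2 * f x ^ 2 + (2 * t * (f x * g x) + g x ^ 2)) ∂μ
          = (∫ x, t ^ 2 * f x ^ 2 ∂μ) + ∫ x, (2 * t * (f x * g x) + g x ^ 2) ∂μ :=
        integral_add (hf2.const_mul _) ((hfg.const_mul _).add hg2)
      have i2 : ∫ x, (2 * t * (f x * g x) + g x ^ 2) ∂μ
          = (∫ x, 2 * t * (f x * g x) ∂μ) + ∫ x, g x ^ 2 ∂μ :=
        integral_add (hfg.const_mul _) hg2
      rw [e1, i1, i2, integral_const_mul, integral_const_mul]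
      ring
    nlinarith [h1, h2]
  have hd : discrim A (2 * B) C ≤ 0 :=
    discrim_le_zero (by intro x; have := key x; nlinarith)
  rw [discrim] at hd
  have hBsq : B ^ 2 ≤ A * C := by nlinarith
  calc B ≤ |B| := le_abs_self _
    _ = Real.sqrt (B ^ 2) := (Real.sqrt_sq_eq_abs B).symm
    _ ≤ Real.sqrt (A * C) := Real.sqrt_le_sqrt hBsq
    _ = Real.sqrt A * Real.sqrt C := Real.sqrt_mul hA0 C

set_option maxHeartbeats 1000000 in
/-- First-order convergence of the implicit Euler scheme for an abstract parabolic
equation in a Gelfand triple `V ↪ H ↪ V*`: with uniform grid `t_j = jτ`, `τ = T/n`,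
data `F_j = u̇(t_j) + L u(t_j)` and `p₀ = u(0)`, one has
`‖p_j − u(t_j)‖_H² + c_L Σ_{k=1}^j τ ‖p_k − u(t_k)‖_V² ≤ (τ²/(3c_L)) ∫₀^{t_j} ‖ü‖_{V*}²`.
The operator `L : V → V*` is encoded as a continuous bilinear form, the embedding
`ι : V → H` realizes `H`-inner products, and `ü` is the weak second derivative of `u`,
a functional on `V`. -/
theorem implicit_euler_parabolic_convergence
    {V H : Type*} [NormedAddCommGroup V] [InnerProductSpace ℝ V] [CompleteSpace V]
    [NormedAddCommGroup H] [InnerProductSpace ℝ H] [CompleteSpace H]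
    (ι : V →L[ℝ] H) (hdense : DenseRange ι)
    (L : V →L[ℝ] V →L[ℝ] ℝ) (cL : ℝ) (hcL : 0 < cL)
    (hell : ∀ v : V, cL * ‖v‖ ^ 2 ≤ L v v)
    (T τ : ℝ) (n : ℕ) (hn : 0 < n) (hT : 0 < T) (hτ : τ = T / n)
    (u udot : ℝ → V) (uddot : ℝ → (V →L[ℝ] ℝ))
    (hu : ∀ t ∈ Set.Icc (0 : ℝ) T, HasDerivAt u (udot t) t)
    (huddot : ∀ v : V, ∀ t ∈ Set.Icc (0 : ℝ) T,
      HasDerivAt (fun s => ⟪ι (udot s), ι v⟫) (uddot t v) t)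
    (hint : IntervalIntegrable (fun s => ‖uddot s‖ ^ 2) MeasureTheory.volume 0 T)
    (p : ℕ → V) (hp0 : p 0 = u 0)
    (hstep : ∀ j : ℕ, 1 ≤ j → j ≤ n → ∀ v : V,
      ⟪ι (p j) - ι (p (j - 1)), ι v⟫ / τ + L (p j) v
        = ⟪ι (udot ((j : ℝ) * τ)), ι v⟫ + L (u ((j : ℝ) * τ)) v) :
    ∀ j : ℕ, j ≤ n →
      ‖ι (p j) - ι (u ((j : ℝ) * τ))‖ ^ 2
          + cL * ∑ k ∈ Finset.Icc 1 j, τ * ‖p k - u ((k : ℝ) * τ)‖ ^ 2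
        ≤ τ ^ 2 / (3 * cL) * ∫ s in (0 : ℝ)..((j : ℝ) * τ), ‖uddot s‖ ^ 2 := by
  have hnR : (0:ℝ) < n := Nat.cast_pos.mpr hn
  have hτ0 : 0 < τ := by rw [hτ]; positivity
  have hnτ : (n:ℝ) * τ = T := by rw [hτ]; field_simp
  have inner_id : ∀ x y : H, 2 * ⟪x - y, x⟫ = ‖x‖ ^ 2 - ‖y‖ ^ 2 + ‖x - y‖ ^ 2 := by
    intro x y
    have h1 : ‖x - y‖ ^ 2 = ‖x‖ ^ 2 - 2 * ⟪x, y⟫ + ‖y‖ ^ 2 := norm_sub_sq_real x y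
    have h2 : ⟪x - y, x⟫ = ⟪x, x⟫ - ⟪y, x⟫ := inner_sub_left x y x
    have h3 : ⟪y, x⟫ = ⟪x, y⟫ := by rw [real_inner_comm]
    have h4 : ⟪x, x⟫ = ‖x‖ ^ 2 := real_inner_self_eq_norm_sq x
    linarith
  intro j
  induction j with
  | zero =>
    intro _
    simp [hp0]
  | succ j ih =>
    intro hj1
    have hjn : j ≤ n := Nat.le_of_succ_le hj1
    have IH := ih hjn
    have hcast : ((j + 1 : ℕ) : ℝ) * τ = (j : ℝ) * τ + τ := by push_cast; ring
    set a : ℝ := (j : ℝ) * τ with ha_def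
    set b : ℝ := a + τ with hb_def
    rw [hcast]
    have ha0 : 0 ≤ a := by positivity
    have hab : a ≤ b := by rw [hb_def]; linarith
    have hbT : b ≤ T := by
      have hj' : ((j:ℝ) + 1) ≤ (n:ℝ) := by exact_mod_cast hj1
      rw [hb_def, ha_def, ← hnτ]; nlinarith
    have haT : a ≤ T := le_trans hab hbT
    have hsubIcc : Set.Icc a b ⊆ Set.Icc 0 T := Set.Icc_subset_Icc ha0 hbT
    -- integrability of ‖uddot‖² on [a,b] and [0,a]
    have hI2 : IntervalIntegrable (fun s => ‖uddot s‖ ^ 2) volume a b :=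
      hint.mono_set (by rw [Set.uIcc_of_le hab, Set.uIcc_of_le hT.le]; exact hsubIcc)
    have hI2' : IntervalIntegrable (fun s => ‖uddot s‖ ^ 2) volume 0 a :=
      hint.mono_set (by
        rw [Set.uIcc_of_le ha0, Set.uIcc_of_le hT.le]
        exact Set.Icc_subset_Icc le_rfl haT)
    -- integrability of ‖uddot‖ on [a,b]
    have hnormmeas : AEStronglyMeasurable (fun s => ‖uddot s‖)
        (volume.restrict (Set.Ioc a b)) := by
      have h2 := ((intervalIntegrable_iff_integrableOn_Ioc_of_le hab).1 hI2).aestronglyMeasurable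
      have he : (fun s => ‖uddot s‖) = fun s => Real.sqrt (‖uddot s‖ ^ 2) := by
        ext s; rw [Real.sqrt_sq (norm_nonneg _)]
      rw [he]
      exact Real.continuous_sqrt.comp_aestronglyMeasurable h2
    have hInorm : IntervalIntegrable (fun s => ‖uddot s‖) volume a b := by
      rw [intervalIntegrable_iff_integrableOn_Ioc_of_le hab]
      have hdom : IntegrableOn (fun s => 1 + ‖uddot s‖ ^ 2) (Set.Ioc a b) volume :=
        (intervalIntegrable_iff_integrableOn_Ioc_of_le hab).1
          ((intervalIntegrable_const).add hI2)
      refine MeasureTheory.Integrable.mono hdom hnormmeas ?_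
      filter_upwards with s
      have h1 : ‖uddot s‖ ≤ 1 + ‖uddot s‖ ^ 2 := by nlinarith [sq_nonneg (‖uddot s‖ - 1)]
      have h0 : (0:ℝ) ≤ 1 + ‖uddot s‖ ^ 2 := by positivity
      rw [Real.norm_eq_abs, Real.norm_eq_abs, abs_of_nonneg (norm_nonneg _), abs_of_nonneg h0]
      exact h1
    -- measurability of s ↦ uddot s v
    have hmeas_v : ∀ v : V, AEStronglyMeasurable (fun s => uddot s v)
        (volume.restrict (Set.Ioc a b)) := by
      intro v
      refine ((measurable_deriv (fun s => ⟪ι (udot s), ι v⟫)).aestronglyMeasurable).congr ?_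
      refine Filter.eventually_of_mem (self_mem_ae_restrict measurableSet_Ioc) (fun s hs => ?_)
      exact ((huddot v s (hsubIcc (Set.Ioc_subset_Icc_self hs))).deriv)
    -- interval integrability of s ↦ (s-a) * uddot s v
    have hIv : ∀ v : V, IntervalIntegrable (fun s => (s - a) * uddot s v) volume a b := by
      intro v
      rw [intervalIntegrable_iff_integrableOn_Ioc_of_le hab]
      have hdom : IntegrableOn (fun s => (τ * ‖v‖) * ‖uddot s‖) (Set.Ioc a b) volume :=
        (intervalIntegrable_iff_integrableOn_Ioc_of_le hab).1 (hInorm.const_mul _)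
      refine MeasureTheory.Integrable.mono hdom
        ((((measurable_id.sub measurable_const).aestronglyMeasurable).mul (hmeas_v v)).congr
          (Filter.Eventually.of_forall fun s => rfl)) ?_
      filter_upwards [self_mem_ae_restrict measurableSet_Ioc] with s hs
      have h1 : |s - a| ≤ τ := by
        rw [abs_of_nonneg (by linarith [hs.1] : (0:ℝ) ≤ s - a)]
        have := hs.2; rw [hb_def] at this; linarith
      have h2 : |uddot s v| ≤ ‖uddot s‖ * ‖v‖ := by
        rw [← Real.norm_eq_abs]; exact (uddot s).le_opNorm v
      have h3 : (0:ℝ) ≤ τ * ‖v‖ * ‖uddot s‖ := by positivity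
      rw [Real.norm_eq_abs, Real.norm_eq_abs, abs_of_nonneg h3, abs_mul]
      calc |s - a| * |uddot s v| ≤ τ * (‖uddot s‖ * ‖v‖) :=
            mul_le_mul h1 h2 (abs_nonneg _) hτ0.le
        _ = τ * ‖v‖ * ‖uddot s‖ := by ring
    -- Taylor remainder formula
    have taylor : ∀ v : V,
        ⟪ι (u b) - ι (u a), ι v⟫
          = τ * ⟪ι (udot b), ι v⟫ - ∫ s in a..b, (s - a) * uddot s v := by
      intro v
      have hder : ∀ s ∈ Set.Icc (0:ℝ) T,
          HasDerivAt (fun s => ⟪ι (u s), ι v⟫) (⟪ι (udot s), ι v⟫) s := by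
        intro s hs
        have hF : HasDerivAt (fun s => ((innerSL ℝ (ι v)).comp ι) (u s))
            (((innerSL ℝ (ι v)).comp ι) (udot s)) s :=
          ((innerSL ℝ (ι v)).comp ι).hasFDerivAt.comp_hasDerivAt s (hu s hs)
        simp only [ContinuousLinearMap.coe_comp', Function.comp_apply, innerSL_apply_apply] at hF
        have h1 : (fun s => ⟪ι v, ι (u s)⟫) = (fun s => ⟪ι (u s), ι v⟫) := by
          funext s; rw [real_inner_comm]
        have h2 : ⟪ι v, ι (udot s)⟫ = ⟪ι (udot s), ι v⟫ := by rw [real_inner_comm]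
        rw [← h1, ← h2]
        exact hF
      have hφd : ∀ s ∈ Set.uIcc a b,
          HasDerivAt (fun s => (s - a) * ⟪ι (udot s), ι v⟫ - ⟪ι (u s), ι v⟫)
            ((s - a) * uddot s v) s := by
        intro s hs
        rw [Set.uIcc_of_le hab] at hs
        have hsT : s ∈ Set.Icc (0:ℝ) T := hsubIcc hs
        have h1 := (((hasDerivAt_id s).sub_const a).mul (huddot v s hsT)).sub (hder s hsT)
        simp only [id_eq] at h1
        exact h1.congr_deriv (by ring)
      have hFTC := intervalIntegral.integral_eq_sub_of_hasDerivAt hφd (hIv v)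
      have hba : b - a = τ := by rw [hb_def]; ring
      rw [hba, sub_self, zero_mul, zero_sub] at hFTC
      have hlhs : ⟪ι (u b) - ι (u a), ι v⟫ = ⟪ι (u b), ι v⟫ - ⟪ι (u a), ι v⟫ :=
        inner_sub_left _ _ _
      linarith [hFTC, hlhs]
    -- the error and the error equation
    set e : V := p (j + 1) - u b with he_def
    set eH : H := ι (p (j + 1)) - ι (u b) with heH_def
    set eH' : H := ι (p j) - ι (u a) with heH'_def
    have hιe : ι e = eH := by rw [he_def, heH_def, map_sub]
    have herr : ⟪eH - eH', eH⟫ + τ * L e e = ∫ s in a..b, (s - a) * uddot s e := by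
      have h := hstep (j + 1) (Nat.succ_le_succ (Nat.zero_le j)) hj1 e
      simp only [Nat.add_sub_cancel] at h
      rw [show ((j + 1 : ℕ) : ℝ) * τ = b by rw [hb_def, ha_def]; push_cast; ring] at h
      rw [div_add' _ _ _ hτ0.ne', div_eq_iff hτ0.ne'] at h
      have ht := taylor e
      have hlin : ⟪eH - eH', eH⟫
          = ⟪ι (p (j+1)) - ι (p j), ι e⟫ - ⟪ι (u b) - ι (u a), ι e⟫ := by
        rw [hιe, heH_def, heH'_def]
        simp only [inner_sub_left]
        ring
      have hLe : L e e = L (p (j+1)) e - L (u b) e := by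
        have hL2 : L e = L (p (j+1)) - L (u b) := by rw [he_def, map_sub]
        rw [hL2, ContinuousLinearMap.sub_apply]
      rw [hlin, hLe, ht]
      linear_combination h
    -- bound on the remainder R
    set I : ℝ := ∫ s in a..b, ‖uddot s‖ ^ 2 with hI_def
    have hI0 : 0 ≤ I := intervalIntegral.integral_nonneg hab (fun s _ => sq_nonneg _)
    have hInt2 : IntervalIntegrable (fun s => ‖e‖ * ((s - a) * ‖uddot s‖)) volume a b := by
      have hc : ContinuousOn (fun s => ‖e‖ * (s - a)) (Set.uIcc a b) :=
        (continuous_const.mul (continuous_id.sub continuous_const)).continuousOn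
      have h2 := hInorm.continuousOn_mul hc
      refine h2.congr (fun s _ => ?_)
      ring
    have hIfg : IntervalIntegrable (fun s => (s - a) * ‖uddot s‖) volume a b :=
      hInorm.continuousOn_mul ((continuous_id.sub continuous_const)).continuousOn
    have hR1 : (∫ s in a..b, (s - a) * uddot s e) ≤ ‖e‖ * ∫ s in a..b, (s - a) * ‖uddot s‖ := by
      rw [← intervalIntegral.integral_const_mul]
      refine intervalIntegral.integral_mono_on hab (hIv e) hInt2 ?_
      intro s hs
      have h1 : uddot s e ≤ ‖uddot s‖ * ‖e‖ := by
        refine le_trans (le_abs_self _) ?_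
        rw [← Real.norm_eq_abs]; exact (uddot s).le_opNorm e
      have h2 : (0:ℝ) ≤ s - a := by linarith [hs.1]
      nlinarith [mul_le_mul_of_nonneg_left h1 h2]
    have hCS : (∫ s in a..b, (s - a) * ‖uddot s‖)
        ≤ Real.sqrt (∫ s in a..b, (s - a) ^ 2) * Real.sqrt I := by
      rw [hI_def, intervalIntegral.integral_of_le hab, intervalIntegral.integral_of_le hab,
        intervalIntegral.integral_of_le hab]
      have hsqint : IntervalIntegrable (fun s => (s - a) ^ 2) volume a b :=
        ((continuous_id.sub continuous_const).pow 2).intervalIntegrable a b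
      exact my_integral_cauchy_schwarz _ _ _
        ((intervalIntegrable_iff_integrableOn_Ioc_of_le hab).1 hsqint)
        ((intervalIntegrable_iff_integrableOn_Ioc_of_le hab).1 hI2)
        ((intervalIntegrable_iff_integrableOn_Ioc_of_le hab).1 hIfg)
    have hsq1 : (∫ s in a..b, (s - a) ^ 2) = τ ^ 3 / 3 := by
      have h := intervalIntegral.integral_comp_sub_right (fun x => x ^ 2) a (a := a) (b := b)
      rw [h, sub_self, show b - a = τ by rw [hb_def]; ring, integral_pow]
      norm_num
    rw [hsq1] at hCS
    -- Young's inequality step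
    set S : ℝ := Real.sqrt (τ ^ 3 / 3) * Real.sqrt I with hS_def
    have hS0 : 0 ≤ S := mul_nonneg (Real.sqrt_nonneg _) (Real.sqrt_nonneg _)
    have hS2 : S ^ 2 = τ ^ 3 / 3 * I := by
      rw [hS_def, mul_pow, Real.sq_sqrt (by positivity), Real.sq_sqrt hI0]
    have hRle : (∫ s in a..b, (s - a) * uddot s e) ≤ ‖e‖ * S := by
      refine le_trans hR1 ?_
      exact mul_le_mul_of_nonneg_left hCS (norm_nonneg e)
    have hY : ‖e‖ * S ≤ cL * τ / 2 * ‖e‖ ^ 2 + τ ^ 2 / (6 * cL) * I := by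
      have hpos : 0 < cL * τ := mul_pos hcL hτ0
      have key : 2 * (cL * τ) * (‖e‖ * S) ≤ (cL * τ) ^ 2 * ‖e‖ ^ 2 + τ ^ 3 / 3 * I := by
        nlinarith [sq_nonneg (cL * τ * ‖e‖ - S)]
      have heq : cL * τ / 2 * ‖e‖ ^ 2 + τ ^ 2 / (6 * cL) * I
          = ((cL * τ) ^ 2 * ‖e‖ ^ 2 + τ ^ 3 / 3 * I) / (2 * (cL * τ)) := by
        field_simp
        ring
      rw [heq, le_div_iff₀ (by positivity : (0:ℝ) < 2 * (cL * τ))]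
      nlinarith [key]
    -- per-step key estimate
    have hτL : τ * (cL * ‖e‖ ^ 2) ≤ τ * L e e :=
      mul_le_mul_of_nonneg_left (hell e) hτ0.le
    have hiden := inner_id eH eH'
    have hkey : ‖eH‖ ^ 2 + cL * (τ * ‖e‖ ^ 2) ≤ ‖eH'‖ ^ 2 + τ ^ 2 / (3 * cL) * I := by
      have heq1 : τ * (cL * ‖e‖ ^ 2) = cL * (τ * ‖e‖ ^ 2) := by ring
      have heq2 : cL * τ / 2 * ‖e‖ ^ 2 = cL * (τ * ‖e‖ ^ 2) / 2 := by ring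
      have heq3 : τ ^ 2 / (6 * cL) * I = τ ^ 2 / (3 * cL) * I / 2 := by ring
      nlinarith [sq_nonneg ‖eH - eH'‖, herr, hiden, hτL, hRle, hY]
    -- assemble with the inductive hypothesis
    have hsplit : (∫ s in (0:ℝ)..a, ‖uddot s‖ ^ 2) + (∫ s in a..b, ‖uddot s‖ ^ 2)
        = ∫ s in (0:ℝ)..b, ‖uddot s‖ ^ 2 :=
      intervalIntegral.integral_add_adjacent_intervals hI2' hI2
    have hsum : ∑ k ∈ Finset.Icc 1 (j+1), τ * ‖p k - u ((k : ℝ) * τ)‖ ^ 2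
        = (∑ k ∈ Finset.Icc 1 j, τ * ‖p k - u ((k : ℝ) * τ)‖ ^ 2)
          + τ * ‖p (j+1) - u (((j+1 : ℕ) : ℝ) * τ)‖ ^ 2 :=
      Finset.sum_Icc_succ_top (Nat.succ_le_succ (Nat.zero_le j)) _
    rw [hsum, hcast, ← he_def, ← hsplit, ← hI_def, mul_add, mul_add]
    linarith [IH, hkey]
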